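/- Let ψ : ℝ^m → ℝ be defined by ψ(z) = ∫₀^{|z|} ω(t) dt with ω(t) = (a−b)e^{−βt} + b where a > b > 0, β > 0. Then ψ is Lipschitz continuous with Lipschitz constant a, and for all z₁, z₂ ∈ ℝ^m, ψ⁰(z₁; z₂−z₁) + ψ⁰(z₂; z₁−z₂) ≤ β(a−b)|z₁−z₂|². -/

import Mathlib

open Filter

/-- The Clarke generalized directional derivative of `ψ` at `u` in the direction `v`. -/
noncomputable def clarkeDeriv {V : Type*} [NormedAddCommGroup V] [NormedSpace ℝ V]
    (ψ : V → ℝ) (u v : V) : ℝ :=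
  limsup (fun p : V × ℝ => (ψ (p.1 + p.2 • v) - ψ p.1) / p.2)
    ((nhds u) ×ˢ (nhdsWithin (0 : ℝ) (Set.Ioi 0)))

private lemma limsup_le_aux {α : Type*} {F : Filter α} [F.NeBot]
    {f g : α → ℝ} {L C : ℝ}
    (hfg : ∀ᶠ p in F, f p ≤ g p) (hlb : ∀ᶠ p in F, C ≤ f p)
    (hg : Filter.Tendsto g F (nhds L)) : Filter.limsup f F ≤ L := by
  rw [← hg.limsup_eq]
  refine Filter.limsup_le_limsup hfg ?_ ?_
  · exact Filter.IsBoundedUnder.isCoboundedUnder_le ⟨C, Filter.eventually_map.2 hlb⟩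
  · exact hg.isBoundedUnder_le

set_option maxHeartbeats 1000000 in
/-- For `ψ(z) = ∫₀^{|z|} ω(t) dt` with `ω(t) = (a−b)e^{−βt} + b`, `a > b > 0`, `β > 0`,
`ψ` is Lipschitz with constant `a` and
`ψ⁰(z₁; z₂−z₁) + ψ⁰(z₂; z₁−z₂) ≤ β(a−b)|z₁−z₂|²` for all `z₁, z₂ ∈ ℝ^m`. -/
theorem friction_potential_properties
    (m : ℕ) (a b β : ℝ) (hab : b < a) (hb : 0 < b) (hβ : 0 < β)
    (ω : ℝ → ℝ) (hω : ∀ t : ℝ, ω t = (a - b) * Real.exp (-β * t) + b)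
    (ψ : EuclideanSpace ℝ (Fin m) → ℝ)
    (hψ : ∀ z : EuclideanSpace ℝ (Fin m), ψ z = ∫ t in (0 : ℝ)..‖z‖, ω t) :
    LipschitzWith (Real.toNNReal a) ψ ∧
      ∀ z₁ z₂ : EuclideanSpace ℝ (Fin m),
        clarkeDeriv ψ z₁ (z₂ - z₁) + clarkeDeriv ψ z₂ (z₁ - z₂)
          ≤ β * (a - b) * ‖z₁ - z₂‖ ^ 2 := by
  have ha : (0:ℝ) < a := hb.trans hab
  have hcoe : ((Real.toNNReal a : NNReal) : ℝ) = a := Real.coe_toNNReal a ha.le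
  -- basic facts about ω
  have hωc : Continuous ω := by
    have : ω = fun t => (a - b) * Real.exp (-β * t) + b := funext hω
    rw [this]; fun_prop
  have hωpos : ∀ t : ℝ, 0 < ω t := by
    intro t
    rw [hω]
    nlinarith [Real.exp_pos (-β * t)]
  have hωa : ∀ t : ℝ, 0 ≤ t → ω t ≤ a := by
    intro t ht
    rw [hω]
    have h1 : Real.exp (-β * t) ≤ 1 := Real.exp_le_one_iff.2 (by nlinarith)
    nlinarith [Real.exp_pos (-β * t)]
  have hωanti : ∀ s t : ℝ, s ≤ t → ω t ≤ ω s := by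
    intro s t hst
    rw [hω, hω]
    have : Real.exp (-β * t) ≤ Real.exp (-β * s) := Real.exp_le_exp.2 (by nlinarith)
    nlinarith
  have hωint : ∀ r s : ℝ, IntervalIntegrable ω MeasureTheory.volume r s :=
    fun r s => hωc.intervalIntegrable r s
  -- Lipschitz bound for ω on [0,∞)
  have hωlip : ∀ r s : ℝ, 0 ≤ r → r ≤ s → ω r - ω s ≤ β * (a - b) * (s - r) := by
    intro r s hr hrs
    rw [hω, hω]
    have h1 : Real.exp (-β * r) ≤ 1 := Real.exp_le_one_iff.2 (by nlinarith)
    have h2 : Real.exp (-β * s) = Real.exp (-β * r) * Real.exp (-β * (s - r)) := by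
      rw [← Real.exp_add]; ring_nf
    have h3 : 1 - Real.exp (-β * (s - r)) ≤ β * (s - r) := by
      have := Real.add_one_le_exp (-(β * (s - r)))
      have he : -β * (s - r) = -(β * (s - r)) := by ring
      rw [he]; linarith
    have h4 : Real.exp (-β * (s - r)) ≤ 1 := Real.exp_le_one_iff.2 (by nlinarith)
    have h5 : (a - b) * Real.exp (-β * r) + b - ((a - b) * Real.exp (-β * s) + b)
        = (a - b) * (Real.exp (-β * r) * (1 - Real.exp (-β * (s - r)))) := by
      rw [h2]; ring
    rw [h5]
    have h6 : Real.exp (-β * r) * (1 - Real.exp (-β * (s - r))) ≤ 1 * (β * (s - r)) :=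
      mul_le_mul h1 h3 (by linarith) one_pos.le
    calc (a - b) * (Real.exp (-β * r) * (1 - Real.exp (-β * (s - r))))
        ≤ (a - b) * (1 * (β * (s - r))) :=
          mul_le_mul_of_nonneg_left h6 (by linarith)
      _ = β * (a - b) * (s - r) := by ring
  -- concavity inequality for the primitive
  have hconc : ∀ r s : ℝ, (∫ t in r..s, ω t) ≤ ω r * (s - r) := by
    intro r s
    rcases le_total r s with h | h
    · have h1 : (∫ t in r..s, ω t) ≤ ∫ _t in r..s, ω r :=
        intervalIntegral.integral_mono_on h (hωint r s) intervalIntegrable_const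
          (fun t ht => hωanti r t ht.1)
      simpa [mul_comm] using h1
    · rw [intervalIntegral.integral_symm]
      have h1 : (∫ _t in s..r, ω r) ≤ ∫ t in s..r, ω t :=
        intervalIntegral.integral_mono_on h intervalIntegrable_const (hωint s r)
          (fun t ht => hωanti t r ht.2)
      have h2 : ω r * (r - s) ≤ ∫ t in s..r, ω t := by simpa [mul_comm] using h1
      linarith
  -- Lipschitz continuity of ψ
  have hLip : LipschitzWith (Real.toNNReal a) ψ := by
    refine LipschitzWith.of_dist_le_mul fun x y => ?_
    have h1 : ψ x - ψ y = ∫ t in ‖y‖..‖x‖, ω t := by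
      rw [hψ, hψ, intervalIntegral.integral_interval_sub_left (hωint _ _) (hωint _ _)]
    have h2 : ‖∫ t in ‖y‖..‖x‖, ω t‖ ≤ a * |‖x‖ - ‖y‖| := by
      refine intervalIntegral.norm_integral_le_of_norm_le_const fun t ht => ?_
      have ht0 : 0 ≤ t := by
        rcases Set.mem_uIoc.1 ht with h | h
        · exact le_trans (norm_nonneg y) h.1.le
        · exact le_trans (norm_nonneg x) h.1.le
      rw [Real.norm_eq_abs, abs_of_pos (hωpos t)]
      exact hωa t ht0
    calc dist (ψ x) (ψ y) = |ψ x - ψ y| := Real.dist_eq _ _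
      _ = ‖∫ t in ‖y‖..‖x‖, ω t‖ := by rw [h1, Real.norm_eq_abs]
      _ ≤ a * |‖x‖ - ‖y‖| := h2
      _ ≤ a * ‖x - y‖ := by
          have := abs_norm_sub_norm_le x y
          nlinarith [abs_nonneg (‖x‖ - ‖y‖)]
      _ = (Real.toNNReal a : ℝ) * dist x y := by rw [hcoe, dist_eq_norm]
  refine ⟨hLip, ?_⟩
  -- pointwise bound on difference quotients
  have hq : ∀ (v x : EuclideanSpace ℝ (Fin m)) (t : ℝ), 0 < t → |(ψ (x + t • v) - ψ x) / t| ≤ a * ‖v‖ := by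
    intro v x t ht
    rw [abs_div, abs_of_pos ht, div_le_iff₀ ht]
    have h1 : dist (ψ (x + t • v)) (ψ x) ≤ (Real.toNNReal a : ℝ) * dist (x + t • v) x :=
      hLip.dist_le_mul _ _
    rw [hcoe, dist_eq_norm, dist_eq_norm, add_sub_cancel_left, norm_smul] at h1
    have hnt : ‖t‖ = t := by rw [Real.norm_eq_abs, abs_of_pos ht]
    rw [hnt] at h1
    rw [← Real.norm_eq_abs]
    calc ‖ψ (x + t • v) - ψ x‖ ≤ a * (t * ‖v‖) := h1
      _ = a * ‖v‖ * t := by ring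
  -- the product filter is NeBot
  have hNB : ∀ z : EuclideanSpace ℝ (Fin m), ((nhds z) ×ˢ (nhdsWithin (0:ℝ) (Set.Ioi 0))).NeBot := fun z => by
    have := nhdsGT_neBot (0:ℝ)
    infer_instance
  have hpos : ∀ z : EuclideanSpace ℝ (Fin m), ∀ᶠ p : EuclideanSpace ℝ (Fin m) × ℝ in (nhds z) ×ˢ (nhdsWithin (0:ℝ) (Set.Ioi 0)), 0 < p.2 :=
    fun z => Filter.Eventually.prod_inr (eventually_mem_nhdsWithin) _
  -- easy bound: clarkeDeriv ψ z v ≤ a * ‖v‖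
  have hclarke_norm : ∀ z v : EuclideanSpace ℝ (Fin m), clarkeDeriv ψ z v ≤ a * ‖v‖ := by
    intro z v
    have := hNB z
    refine limsup_le_aux (C := -(a * ‖v‖)) ?_ ?_ tendsto_const_nhds
    · filter_upwards [hpos z] with p hp
      exact (abs_le.1 (hq v p.1 p.2 hp)).2
    · filter_upwards [hpos z] with p hp
      exact (abs_le.1 (hq v p.1 p.2 hp)).1
  -- sharp bound at nonzero points
  have hclarke_inner : ∀ z v : EuclideanSpace ℝ (Fin m), z ≠ 0 →
      clarkeDeriv ψ z v ≤ ω ‖z‖ * ((inner ℝ z v : ℝ) / ‖z‖) := by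
    intro z v hz
    have := hNB z
    set F := (nhds z) ×ˢ (nhdsWithin (0:ℝ) (Set.Ioi 0)) with hF
    have hle : F ≤ nhds (z, (0:ℝ)) := by
      rw [nhds_prod_eq]
      exact Filter.prod_mono le_rfl nhdsWithin_le_nhds
    have hcont : Continuous (fun p : EuclideanSpace ℝ (Fin m) × ℝ => p.1 + p.2 • v) := by fun_prop
    have htend : Filter.Tendsto (fun p : EuclideanSpace ℝ (Fin m) × ℝ => p.1 + p.2 • v) F (nhds z) := by
      have h0 : Filter.Tendsto (fun p : EuclideanSpace ℝ (Fin m) × ℝ => p.1 + p.2 • v) (nhds (z, (0:ℝ)))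
          (nhds (z + (0:ℝ) • v)) := hcont.continuousAt.tendsto
      simpa using h0.mono_left hle
    have hne : ∀ᶠ p : EuclideanSpace ℝ (Fin m) × ℝ in F, p.1 + p.2 • v ≠ 0 := htend.eventually_ne hz
    set g := fun p : EuclideanSpace ℝ (Fin m) × ℝ => ω ‖p.1‖ * ((inner ℝ (p.1 + p.2 • v) v : ℝ) / ‖p.1 + p.2 • v‖)
      with hg
    have hgt : Filter.Tendsto g F (nhds (ω ‖z‖ * ((inner ℝ z v : ℝ) / ‖z‖))) := by
      have hgc : ContinuousAt g (z, (0:ℝ)) := by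
        have h1 : ContinuousAt (fun p : EuclideanSpace ℝ (Fin m) × ℝ => ω ‖p.1‖) (z, (0:ℝ)) :=
          (hωc.comp (continuous_norm.comp continuous_fst)).continuousAt
        have h2 : ContinuousAt (fun p : EuclideanSpace ℝ (Fin m) × ℝ => (inner ℝ (p.1 + p.2 • v) v : ℝ)) (z, (0:ℝ)) :=
          ((continuous_inner.comp (hcont.prodMk continuous_const))).continuousAt
        have h3 : ContinuousAt (fun p : EuclideanSpace ℝ (Fin m) × ℝ => ‖p.1 + p.2 • v‖) (z, (0:ℝ)) :=
          (continuous_norm.comp hcont).continuousAt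
        have h4 : ‖z + (0:ℝ) • v‖ ≠ 0 := by
          simpa using norm_ne_zero_iff.2 hz
        exact h1.mul (h2.div h3 h4)
      have h7 : g (z, (0:ℝ)) = ω ‖z‖ * ((inner ℝ z v : ℝ) / ‖z‖) := by
        simp only [hg, zero_smul, add_zero]
      exact h7 ▸ (hgc.tendsto.mono_left hle)
    refine limsup_le_aux (C := -(a * ‖v‖)) ?_ ?_ hgt
    · filter_upwards [hne, hpos z] with p h0 ht
      set x := p.1
      set t := p.2
      set w := x + t • v with hw
      have hwpos : 0 < ‖w‖ := norm_pos_iff.2 h0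
      have hcs : (inner ℝ w x : ℝ) ≤ ‖w‖ * ‖x‖ := real_inner_le_norm w x
      have hww : (inner ℝ w w : ℝ) = ‖w‖ ^ 2 := real_inner_self_eq_norm_sq w
      have hwv : t * (inner ℝ w v : ℝ) = (inner ℝ w w : ℝ) - (inner ℝ w x : ℝ) := by
        have h5 : w - x = t • v := by rw [hw]; abel
        rw [← inner_sub_right, h5, real_inner_smul_right]
      have key : ‖w‖ - ‖x‖ ≤ t * ((inner ℝ w v : ℝ) / ‖w‖) := by
        rw [mul_div_assoc'] at *
        rw [le_div_iff₀ hwpos, hwv, hww]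
        nlinarith
      have hψd : ψ w - ψ x ≤ ω ‖x‖ * (‖w‖ - ‖x‖) := by
        rw [hψ w, hψ x,
          intervalIntegral.integral_interval_sub_left (hωint _ _) (hωint _ _)]
        exact hconc _ _
      have h6 : ψ w - ψ x ≤ ω ‖x‖ * (t * ((inner ℝ w v : ℝ) / ‖w‖)) :=
        le_trans hψd (mul_le_mul_of_nonneg_left key (hωpos _).le)
      rw [div_le_iff₀ ht]
      calc ψ w - ψ x ≤ ω ‖x‖ * (t * ((inner ℝ w v : ℝ) / ‖w‖)) := h6
        _ = g p * t := by rw [hg]; ring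
    · filter_upwards [hpos z] with p hp
      exact (abs_le.1 (hq v p.1 p.2 hp)).1
  -- the zero/nonzero mixed case
  have hzero : ∀ z : EuclideanSpace ℝ (Fin m), z ≠ 0 →
      clarkeDeriv ψ 0 (z - 0) + clarkeDeriv ψ z (0 - z) ≤ β * (a - b) * ‖z‖ ^ 2 := by
    intro z hz
    have hz0 : 0 < ‖z‖ := norm_pos_iff.2 hz
    have h1 : clarkeDeriv ψ 0 (z - 0) ≤ a * ‖z‖ := by
      simpa using hclarke_norm 0 (z - 0)
    have h2 := hclarke_inner z (0 - z) hz
    have hi : (inner ℝ z (0 - z) : ℝ) = -(‖z‖ ^ 2) := by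
      rw [inner_sub_right, inner_zero_right, real_inner_self_eq_norm_sq]
      ring
    rw [hi] at h2
    have h2' : clarkeDeriv ψ z (0 - z) ≤ -(ω ‖z‖ * ‖z‖) := by
      have : -(‖z‖ ^ 2) / ‖z‖ = -‖z‖ := by
        field_simp
      rw [this] at h2
      linarith [h2]
    have hexp : a - ω ‖z‖ ≤ β * (a - b) * ‖z‖ := by
      rw [hω]
      have h3 := Real.add_one_le_exp (-(β * ‖z‖))
      have he : -β * ‖z‖ = -(β * ‖z‖) := by ring
      rw [he]
      nlinarith [Real.exp_pos (-(β * ‖z‖))]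
    nlinarith
  intro z₁ z₂
  by_cases h12 : z₁ = z₂
  · subst h12
    have h1 : clarkeDeriv ψ z₁ (z₁ - z₁) ≤ a * ‖z₁ - z₁‖ := hclarke_norm _ _
    simp only [sub_self, norm_zero, mul_zero] at h1 ⊢
    linarith
  by_cases h1 : z₁ = 0
  · subst h1
    have h2 : z₂ ≠ 0 := fun h => h12 (h ▸ rfl)
    have := hzero z₂ h2
    have hn : ‖(0:EuclideanSpace ℝ (Fin m)) - z₂‖ = ‖z₂‖ := by simp
    rw [hn]
    linarith
  by_cases h2 : z₂ = 0
  · subst h2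
    have := hzero z₁ h1
    have hn : ‖z₁ - (0:EuclideanSpace ℝ (Fin m))‖ = ‖z₁‖ := by simp
    rw [hn]
    linarith
  -- both nonzero
  have e₁ := hclarke_inner z₁ (z₂ - z₁) h1
  have e₂ := hclarke_inner z₂ (z₁ - z₂) h2
  set r₁ := ‖z₁‖ with hr₁
  set r₂ := ‖z₂‖ with hr₂
  have hr₁0 : 0 < r₁ := norm_pos_iff.2 h1
  have hr₂0 : 0 < r₂ := norm_pos_iff.2 h2
  set s := (inner ℝ z₁ z₂ : ℝ) with hs
  have hi₁ : (inner ℝ z₁ (z₂ - z₁) : ℝ) = s - r₁ ^ 2 := by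
    rw [inner_sub_right, real_inner_self_eq_norm_sq, hs, hr₁]
  have hi₂ : (inner ℝ z₂ (z₁ - z₂) : ℝ) = s - r₂ ^ 2 := by
    rw [inner_sub_right, real_inner_self_eq_norm_sq, hs, hr₂]
    exact congrArg (· - ‖z₂‖ ^ 2) (real_inner_comm z₁ z₂)
  rw [hi₁] at e₁
  rw [hi₂] at e₂
  have hsle : s ≤ r₁ * r₂ := real_inner_le_norm z₁ z₂
  have hN : ‖z₁ - z₂‖ ^ 2 = r₁ ^ 2 - 2 * s + r₂ ^ 2 := norm_sub_sq_real z₁ z₂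
  -- rewrite the divisions
  have e₁' : clarkeDeriv ψ z₁ (z₂ - z₁) ≤ ω r₁ / r₁ * s - ω r₁ * r₁ := by
    have : ω r₁ * ((s - r₁ ^ 2) / r₁) = ω r₁ / r₁ * s - ω r₁ * r₁ := by
      field_simp
    linarith [this ▸ e₁]
  have e₂' : clarkeDeriv ψ z₂ (z₁ - z₂) ≤ ω r₂ / r₂ * s - ω r₂ * r₂ := by
    have : ω r₂ * ((s - r₂ ^ 2) / r₂) = ω r₂ / r₂ * s - ω r₂ * r₂ := by
      field_simp
    linarith [this ▸ e₂]
  have hu₁ : 0 < ω r₁ / r₁ := div_pos (hωpos r₁) hr₁0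
  have hu₂ : 0 < ω r₂ / r₂ := div_pos (hωpos r₂) hr₂0
  have hu₁' : ω r₁ / r₁ * r₁ = ω r₁ := div_mul_cancel₀ _ hr₁0.ne'
  have hu₂' : ω r₂ / r₂ * r₂ = ω r₂ := div_mul_cancel₀ _ hr₂0.ne'
  -- combine
  have hmain : ω r₁ / r₁ * s - ω r₁ * r₁ + (ω r₂ / r₂ * s - ω r₂ * r₂)
      ≤ β * (a - b) * ‖z₁ - z₂‖ ^ 2 := by
    have hstep : ω r₁ / r₁ * s - ω r₁ * r₁ + (ω r₂ / r₂ * s - ω r₂ * r₂)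
        ≤ -((ω r₁ - ω r₂) * (r₁ - r₂)) := by
      nlinarith [mul_le_mul_of_nonneg_left hsle hu₁.le, mul_le_mul_of_nonneg_left hsle hu₂.le]
    have hsq : (r₁ - r₂) ^ 2 ≤ ‖z₁ - z₂‖ ^ 2 := by nlinarith
    have hba : (0:ℝ) ≤ β * (a - b) := mul_nonneg hβ.le (by linarith)
    have hsq' : β * (a - b) * (r₁ - r₂) ^ 2 ≤ β * (a - b) * ‖z₁ - z₂‖ ^ 2 :=
      mul_le_mul_of_nonneg_left hsq hba
    rcases le_total r₁ r₂ with h | h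
    · have hl := mul_le_mul_of_nonneg_right (hωlip r₁ r₂ hr₁0.le h) (sub_nonneg.2 h)
      nlinarith [hl]
    · have hl := mul_le_mul_of_nonneg_right (hωlip r₂ r₁ hr₂0.le h) (sub_nonneg.2 h)
      nlinarith [hl]
  linarith
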